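/- Let H ∈ ℂ^{Nr×Nt} and let Q, Z ∈ ℂ^{Nt×Nt} be Hermitian positive semidefinite. Set Γ = H†H Q. Then tr(((I + Γ)⁻¹Γ − I) Z Q) ≤ 0; equivalently, with Φ = H†(I + H Q H†)⁻¹H, tr((ΦQ − I) Z Q) ≤ 0. -/

import Mathlib

open Matrix
open scoped ComplexOrder

private lemma aux_push {a b : Type*} [Fintype a] [Fintype b] [DecidableEq a] [DecidableEq b]
    (X : Matrix a b ℂ) (Y : Matrix b a ℂ) (N : Matrix b b ℂ)
    (h1 : (1 + Y * X) * N = 1) :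
    (1 + X * Y) * (1 - X * N * Y) = 1 ∧ (1 + X * Y)⁻¹ = 1 - X * N * Y ∧
      Y * (1 + X * Y)⁻¹ = N * Y := by
  have h1' : N + Y * X * N = 1 := by rwa [Matrix.add_mul, Matrix.one_mul] at h1
  have hYXN : Y * X * N = 1 - N := eq_sub_of_add_eq' h1'
  have e : X * Y * (X * N * Y) = X * Y - X * N * Y := by
    calc X * Y * (X * N * Y) = X * (Y * X * N) * Y := by simp only [Matrix.mul_assoc]
      _ = X * (1 - N) * Y := by rw [hYXN]
      _ = X * Y - X * N * Y := by rw [Matrix.mul_sub, Matrix.mul_one, Matrix.sub_mul]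
  have hright : (1 + X * Y) * (1 - X * N * Y) = 1 := by
    rw [Matrix.add_mul, Matrix.one_mul, Matrix.mul_sub, Matrix.mul_one, e]
    abel
  have hinv : (1 + X * Y)⁻¹ = 1 - X * N * Y := Matrix.inv_eq_right_inv hright
  refine ⟨hright, hinv, ?_⟩
  have e' : Y * (X * N * Y) = Y - N * Y := by
    calc Y * (X * N * Y) = Y * X * N * Y := by simp only [Matrix.mul_assoc]
      _ = (1 - N) * Y := by rw [hYXN]
      _ = Y - N * Y := by rw [Matrix.sub_mul, Matrix.one_mul]
  rw [hinv, Matrix.mul_sub, Matrix.mul_one, e']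
  abel

private lemma trace_nonneg_of_posSemidef {n : Type*} [Fintype n] [DecidableEq n]
    {A : Matrix n n ℂ} (hA : A.PosSemidef) : 0 ≤ A.trace := by
  exact hA.trace_nonneg

/-- For Hermitian positive semidefinite `Q, Z` and `Γ = HᴴH Q`,
the (real) quantity `tr(((I + Γ)⁻¹Γ − I) Z Q)` is nonpositive; equivalently, with
`Φ = Hᴴ(I + H Q Hᴴ)⁻¹H`, `tr((ΦQ − I) Z Q) ≤ 0`. -/
theorem stmt_8 {Nr Nt : ℕ}
    (H : Matrix (Fin Nr) (Fin Nt) ℂ)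
    (Q Z : Matrix (Fin Nt) (Fin Nt) ℂ)
    (hQ : Q.PosSemidef) (hZ : Z.PosSemidef)
    (Γ Φ : Matrix (Fin Nt) (Fin Nt) ℂ)
    (hΓ : Γ = Hᴴ * H * Q)
    (hΦ : Φ = Hᴴ * (1 + H * Q * Hᴴ)⁻¹ * H) :
    ∃ r : ℝ, r ≤ 0 ∧
      Matrix.trace (((1 + Γ)⁻¹ * Γ - 1) * Z * Q) = (r : ℂ) ∧
      Matrix.trace ((Φ * Q - 1) * Z * Q) = (r : ℂ) := by
  classical
  obtain ⟨B, hBB, hBH⟩ : ∃ B : Matrix (Fin Nt) (Fin Nt) ℂ, B * B = Q ∧ Bᴴ = B := by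
    open scoped MatrixOrder in
    exact ⟨CFC.sqrt Q, CFC.sqrt_mul_sqrt_self Q hQ.nonneg, (CFC.sqrt_nonneg Q).posSemidef.1.eq⟩
  -- M = 1 + B Hᴴ H B is positive definite
  have hMpsd : (B * (Hᴴ * H) * B).PosSemidef := by
    have h : B * (Hᴴ * H) * B = (H * B)ᴴ * (H * B) := by
      rw [conjTranspose_mul, hBH]; simp only [Matrix.mul_assoc]
    rw [h]
    exact Matrix.posSemidef_conjTranspose_mul_self _
  have hMpd : (1 + B * (Hᴴ * H) * B).PosDef := Matrix.PosDef.add_posSemidef Matrix.PosDef.one hMpsd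
  set M : Matrix (Fin Nt) (Fin Nt) ℂ := 1 + B * (Hᴴ * H) * B with hMdef
  set N : Matrix (Fin Nt) (Fin Nt) ℂ := M⁻¹ with hNdef
  have hNpd : N.PosDef := hMpd.inv
  have h1 : M * N = 1 := Matrix.mul_nonsing_inv _ (Matrix.isUnit_iff_isUnit_det _ |>.1 hMpd.isUnit)
  -- push-through with X = Hᴴ*H*B, Y = B
  have hXY : Hᴴ * H * B * B = Γ := by rw [hΓ, ← hBB]; simp only [Matrix.mul_assoc]
  have hYX : (1 : Matrix (Fin Nt) (Fin Nt) ℂ) + B * (Hᴴ * H * B) = M := by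
    rw [hMdef]; simp only [Matrix.mul_assoc]
  obtain ⟨hG1, hGinv, hBG⟩ := aux_push (Hᴴ * H * B) B N (by rw [hYX]; exact h1)
  rw [hXY] at hG1 hGinv hBG
  have hG2 : (1 - Hᴴ * H * B * N * B) * (1 + Γ) = 1 := (mul_eq_one_comm).1 hG1
  have hinvG : (1 + Γ)⁻¹ * (1 + Γ) = 1 := by rw [hGinv]; exact hG2
  have hGright : (1 + Γ) * (1 + Γ)⁻¹ = 1 := by rw [hGinv]; exact hG1
  have hkey : (1 + Γ)⁻¹ * Γ - 1 = -(1 + Γ)⁻¹ := by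
    have h' : (1 + Γ)⁻¹ + (1 + Γ)⁻¹ * Γ = 1 := by
      have h'' := hinvG
      rwa [Matrix.mul_add, Matrix.mul_one] at h''
    calc (1 + Γ)⁻¹ * Γ - 1 = (1 + Γ)⁻¹ * Γ - ((1 + Γ)⁻¹ + (1 + Γ)⁻¹ * Γ) := by rw [h']
      _ = -(1 + Γ)⁻¹ := by abel
  -- push-through with X = H*Q, Y = Hᴴ
  have hΓ' : (1 : Matrix (Fin Nt) (Fin Nt) ℂ) + Hᴴ * (H * Q) = 1 + Γ := by
    rw [hΓ]; simp only [Matrix.mul_assoc]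
  obtain ⟨-, -, hHG⟩ := aux_push (H * Q) Hᴴ (1 + Γ)⁻¹ (by rw [hΓ']; exact hGright)
  have hΦQ : Φ * Q = (1 + Γ)⁻¹ * Γ := by
    rw [hΦ, hHG, hΓ]; simp only [Matrix.mul_assoc]
  -- trace computation
  have htr : Matrix.trace (((1 + Γ)⁻¹ * Γ - 1) * Z * Q) = -Matrix.trace (N * (B * Z * B)) := by
    rw [hkey, ← hBB, Matrix.neg_mul, Matrix.neg_mul, trace_neg, neg_inj]
    have e : (1 + Γ)⁻¹ * Z * (B * B) = ((1 + Γ)⁻¹ * (Z * B)) * B := by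
      simp only [Matrix.mul_assoc]
    rw [e, Matrix.trace_mul_comm, ← Matrix.mul_assoc, hBG]
    congr 1
    simp only [Matrix.mul_assoc]
  -- the trace is a nonnegative real
  have hSpsd : (B * Z * B).PosSemidef := by
    have h := hZ.conjTranspose_mul_mul_same B
    rwa [hBH] at h
  obtain ⟨C, hC⟩ : ∃ C : Matrix (Fin Nt) (Fin Nt) ℂ, B * Z * B = Cᴴ * C := by
    open scoped MatrixOrder in
    exact CStarAlgebra.nonneg_iff_eq_star_mul_self.mp hSpsd.nonneg
  have hnn : 0 ≤ Matrix.trace (N * (B * Z * B)) := by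
    rw [hC, ← Matrix.mul_assoc, Matrix.trace_mul_cycle]
    exact trace_nonneg_of_posSemidef (hNpd.posSemidef.mul_mul_conjTranspose_same C)
  set t : ℂ := Matrix.trace (N * (B * Z * B)) with htdef
  have him : t.im = 0 := by
    rw [Complex.le_def] at hnn; simpa using hnn.2.symm
  have hre : 0 ≤ t.re := by
    rw [Complex.le_def] at hnn; simpa using hnn.1
  have hts : t = (t.re : ℂ) := Complex.ext (by simp) (by simp [him])
  have hgoal : -t = ((-t.re : ℝ) : ℂ) := by
    apply Complex.ext <;> simp [him]
  refine ⟨-t.re, by linarith, ?_, ?_⟩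
  · rw [htr, hgoal]
  · have h : Matrix.trace ((Φ * Q - 1) * Z * Q) = Matrix.trace (((1 + Γ)⁻¹ * Γ - 1) * Z * Q) := by
      rw [hΦQ]
    rw [h, htr, hgoal]
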